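/- Let c > −1, ε > 0, and suppose the heat kernel p_B of the one-dimensional Bessel semigroup satisfies |p_B(t,y,ρ)| ≤ C t^{−1/2} ρ^{−c} ((ρ/√t) ∧ 1)^c exp(−|y−ρ|²/(κt)) with respect to the measure ρ^c dρ. Then for every t > 0 the operator f ↦ ∫₀^∞ p_B(t,·,ρ) f(ρ) ρ^c dρ is bounded on L^p((0,∞), y^m dy) for every 1 < p < ∞ with 0 < (m+1)/p < c + 1, with norm bounded uniformly in t. -/

import Mathlib

open Real MeasureTheory Set ENNReal

/-- The weighted measure `y^m dy` on `(0,∞)`. -/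
noncomputable def mu15 (m : ℝ) : Measure ℝ :=
  ((volume : Measure ℝ).withDensity (fun y => ENNReal.ofReal (y ^ m))).restrict (Ioi 0)

namespace Aux15

/-- change of variables `v = s•w` for lintegrals on `(0,∞)`. -/
lemma lintegral_scale (s : ℝ) (hs : 0 < s) (f : ℝ → ℝ≥0∞) :
    ∫⁻ v in Ioi (0:ℝ), f v = ENNReal.ofReal s * ∫⁻ w in Ioi (0:ℝ), f (s * w) := by
  have hse : MeasurableEmbedding (fun x : ℝ => s * x) :=
    (Homeomorph.mulLeft₀ s hs.ne').toMeasurableEquiv.measurableEmbedding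
  have hpre : (fun x : ℝ => s * x) ⁻¹' (Ioi 0) = Ioi 0 := by
    ext x
    simp only [mem_preimage, mem_Ioi]
    constructor
    · intro h; nlinarith
    · intro h; positivity
  have h1 : ∫⁻ w in Ioi (0:ℝ), f (s * w) =
      ∫⁻ x, f x ∂((Measure.map (fun x : ℝ => s * x) volume).restrict (Ioi 0)) := by
    rw [Measure.restrict_map hse.measurable measurableSet_Ioi, hse.lintegral_map, hpre]
  rw [h1, Real.map_volume_mul_left hs.ne', Measure.restrict_smul, lintegral_smul_measure, smul_eq_mul,
    ← mul_assoc, ← ENNReal.ofReal_mul hs.le]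
  rw [abs_of_pos (inv_pos.2 hs), mul_inv_cancel₀ hs.ne', ENNReal.ofReal_one, one_mul]

/-- sup of `r^β * exp(-γ r²)` over `r ≥ 0`. -/
lemma polyexp (β γ : ℝ) (hβ : 0 ≤ β) (hγ : 0 < γ) :
    ∃ S : ℝ, 0 < S ∧ ∀ r : ℝ, 0 ≤ r → r ^ β * Real.exp (-(γ * r ^ 2)) ≤ S := by
  set n : ℕ := ⌈β⌉₊ with hn
  refine ⟨1 + (n / γ) ^ n, by positivity, fun r hr => ?_⟩
  have hb : r ^ β ≤ 1 + (r ^ 2) ^ n := by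
    rcases le_total r 1 with h | h
    · have := Real.rpow_le_one hr h hβ
      nlinarith [pow_nonneg (sq_nonneg r) n]
    · have h1 : r ^ β ≤ r ^ ((2 * n : ℕ) : ℝ) := by
        apply Real.rpow_le_rpow_of_exponent_le h
        calc β ≤ n := Nat.le_ceil β
        _ ≤ (2 * n : ℕ) := by exact_mod_cast Nat.le_mul_of_pos_left n (by norm_num)
      rw [Real.rpow_natCast] at h1
      calc r ^ β ≤ r ^ (2 * n) := h1
      _ = (r ^ 2) ^ n := by rw [pow_mul]
      _ ≤ 1 + (r ^ 2) ^ n := by nlinarith [pow_nonneg (sq_nonneg r) n]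
  have hkey : (r ^ 2) ^ n * Real.exp (-(γ * r ^ 2)) ≤ (n / γ) ^ n := by
    rcases Nat.eq_zero_or_pos n with h0 | h0
    · simp only [h0, pow_zero, one_mul]
      exact Real.exp_le_one_iff.2 (by nlinarith [sq_nonneg r])
    · have hx : (0:ℝ) ≤ γ * r ^ 2 := by positivity
      have h2 : γ * r ^ 2 / n ≤ Real.exp (γ * r ^ 2 / n) := by
        linarith [Real.add_one_le_exp (γ * r ^ 2 / n)]
      have h3 : (γ * r ^ 2 / n) ^ n ≤ Real.exp (γ * r ^ 2 / n) ^ n :=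
        pow_le_pow_left₀ (by positivity) h2 n
      rw [← Real.exp_nat_mul] at h3
      have h4 : (n : ℝ) * (γ * r ^ 2 / n) = γ * r ^ 2 := by
        field_simp
      rw [h4] at h3
      have h5 : (r ^ 2) ^ n = (n / γ) ^ n * (γ * r ^ 2 / n) ^ n := by
        rw [← mul_pow]; congr 1; field_simp
      rw [h5]
      calc (n / γ : ℝ) ^ n * (γ * r ^ 2 / n) ^ n * Real.exp (-(γ * r ^ 2))
          ≤ (n / γ : ℝ) ^ n * Real.exp (γ * r ^ 2) * Real.exp (-(γ * r ^ 2)) := by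
            exact mul_le_mul_of_nonneg_right
              (mul_le_mul_of_nonneg_left h3 (by positivity)) (Real.exp_nonneg _)
      _ = (n / γ : ℝ) ^ n := by rw [mul_assoc, ← Real.exp_add]; simp
  calc r ^ β * Real.exp (-(γ * r ^ 2)) ≤ (1 + (r ^ 2) ^ n) * Real.exp (-(γ * r ^ 2)) := by
        apply mul_le_mul_of_nonneg_right hb (Real.exp_nonneg _)
  _ = Real.exp (-(γ * r ^ 2)) + (r ^ 2) ^ n * Real.exp (-(γ * r ^ 2)) := by ring
  _ ≤ 1 + (n / γ) ^ n := by
        have h6 := Real.exp_le_one_iff.2 (show -(γ * r^2) ≤ 0 by nlinarith [sq_nonneg r])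
        linarith

/-- Gaussian mass bound: uniform in the centre and the set. -/
lemma gauss_bound (κ : ℝ) (hκ : 0 < κ) :
    ∃ G : ℝ, 0 < G ∧ ∀ (u : ℝ) (s : Set ℝ),
      ∫⁻ v in s, ENNReal.ofReal (Real.exp (-(u - v) ^ 2 / κ)) ≤ ENNReal.ofReal G := by
  have hb : (0:ℝ) < 1 / κ := by positivity
  have hint : Integrable (fun x : ℝ => Real.exp (-(1/κ) * x ^ 2)) := integrable_exp_neg_mul_sq hb
  refine ⟨∫ x : ℝ, Real.exp (-(1/κ) * x ^ 2), by
    rw [integral_gaussian]; positivity, fun u s => ?_⟩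
  calc ∫⁻ v in s, ENNReal.ofReal (Real.exp (-(u - v) ^ 2 / κ))
      ≤ ∫⁻ v, ENNReal.ofReal (Real.exp (-(u - v) ^ 2 / κ)) := setLIntegral_le_lintegral _ _
  _ = ∫⁻ v, ENNReal.ofReal (Real.exp (-(1/κ) * (v + -u) ^ 2)) := by
      congr 1; ext v; congr 2; ring_nf
  _ = ∫⁻ v, ENNReal.ofReal (Real.exp (-(1/κ) * v ^ 2)) :=
      lintegral_add_right_eq_self (fun v => ENNReal.ofReal (Real.exp (-(1/κ) * v ^ 2))) (-u)
  _ = ENNReal.ofReal (∫ x : ℝ, Real.exp (-(1/κ) * x ^ 2)) :=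
      (ofReal_integral_eq_lintegral_ofReal hint
        (Filter.Eventually.of_forall fun x => Real.exp_nonneg _)).symm

lemma rpow_ratio {x y : ℝ} (e : ℝ) (hx : 0 < x) (hy : 0 < y) (h1 : y / 2 ≤ x) (h2 : x ≤ 2 * y) :
    x ^ e ≤ 2 ^ |e| * y ^ e := by
  rcases le_total 0 e with he | he
  · calc x ^ e ≤ (2 * y) ^ e := Real.rpow_le_rpow hx.le h2 he
    _ = 2 ^ e * y ^ e := Real.mul_rpow (by norm_num) hy.le
    _ ≤ 2 ^ |e| * y ^ e := by
        apply mul_le_mul_of_nonneg_right _ (Real.rpow_nonneg hy.le e)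
        exact Real.rpow_le_rpow_of_exponent_le one_le_two (le_abs_self e)
  · calc x ^ e ≤ (y / 2) ^ e := Real.rpow_le_rpow_of_nonpos (by positivity) h1 he
    _ = 2 ^ (-e) * y ^ e := by
        rw [div_eq_mul_inv, Real.mul_rpow hy.le (by norm_num), Real.inv_rpow (by norm_num),
          ← Real.rpow_neg (by norm_num)]
        ring
    _ ≤ 2 ^ |e| * y ^ e := by
        apply mul_le_mul_of_nonneg_right _ (Real.rpow_nonneg hy.le e)
        exact Real.rpow_le_rpow_of_exponent_le one_le_two (neg_le_abs e)

set_option maxHeartbeats 2000000 in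
lemma keyU (κ c₁ c₂ α : ℝ) (hκ : 0 < κ) (hc : -1 < c₁ + c₂) (hα₁ : α < c₁ + 1)
    (hα₂ : 0 ≤ c₂ + α) :
    ∃ A : ℝ, 0 < A ∧ ∀ u : ℝ, 0 < u →
      ENNReal.ofReal (min u 1 ^ c₂) *
        ∫⁻ v in Ioi (0:ℝ),
          ENNReal.ofReal (min v 1 ^ c₁ * Real.exp (-(u - v) ^ 2 / κ) * v ^ (-α)) ≤
      ENNReal.ofReal (A * u ^ (-α)) := by
  obtain ⟨G1, hG1pos, hG1⟩ := gauss_bound κ hκ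
  obtain ⟨G2, hG2pos, hG2⟩ := gauss_bound (2*κ) (by linarith)
  obtain ⟨G4, hG4pos, hG4⟩ := gauss_bound (4*κ) (by linarith)
  obtain ⟨S, hSpos, hS⟩ := polyexp |α| (1/(4*κ)) (abs_nonneg _) (by positivity)
  obtain ⟨S1, hS1pos, hS1⟩ := polyexp |α| (1/(8*κ)) (abs_nonneg _) (by positivity)
  obtain ⟨S2, hS2pos, hS2⟩ := polyexp (2*|α|) (1/(8*κ)) (by positivity) (by positivity)
  -- the integral over (0,1] of v^(c₁-α)
  have hioc : IntegrableOn (fun v : ℝ => v ^ (c₁ - α)) (Ioc 0 1) volume := by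
    have := (intervalIntegral.intervalIntegrable_rpow' (a := 0) (b := 1) (r := c₁ - α) (by linarith)).1
    simpa [uIoc_of_le (zero_le_one (α := ℝ))] using this
  set D₀ : ℝ := ∫ v in Ioc (0:ℝ) 1, v ^ (c₁ - α) with hD₀
  have hD₀nonneg : 0 ≤ D₀ :=
    integral_nonneg_of_ae ((ae_restrict_mem measurableSet_Ioc).mono
      (fun v hv => Real.rpow_nonneg hv.1.le _))
  have hD₀int : ∫⁻ v in Ioc (0:ℝ) 1, ENNReal.ofReal (v ^ (c₁ - α)) = ENNReal.ofReal D₀ :=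
    (ofReal_integral_eq_lintegral_ofReal hioc
      ((ae_restrict_mem measurableSet_Ioc).mono (fun v hv => Real.rpow_nonneg hv.1.le _))).symm
  set E₁ : ℝ := D₀ + G2 + 2 ^ |α| * S * G4 with hE₁
  set E₂ : ℝ := 2 ^ |α| * G2 with hE₂
  have hE₁pos : 0 < E₁ := by positivity
  have hE₂pos : 0 < E₂ := by positivity
  set KA : ℝ := 2 ^ |c₁| * 2 ^ |α| * max G1 1 with hKA
  set KB : ℝ := (E₁ + E₂) + E₁ * S1 + E₂ * S2 with hKB
  have hKApos : 0 < KA := by positivity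
  have hKBpos : 0 < KB := by positivity
  refine ⟨KA + KB, by positivity, fun u hu => ?_⟩
  have hmu : 0 < min u 1 := lt_min hu one_pos
  set I : Set ℝ := Ioo (u/2) (3*u/2) with hI
  set P₁ : ℝ := 2 ^ |c₁| * min u 1 ^ c₁ * (2 ^ |α| * u ^ (-α)) with hP₁
  have hP₁nonneg : 0 ≤ P₁ := by positivity
  set g₁ : ℝ → ℝ≥0∞ := I.indicator (fun v => ENNReal.ofReal (P₁ * Real.exp (-(u - v) ^ 2 / κ)))
    with hg₁
  set g₂ : ℝ → ℝ≥0∞ := fun v => ENNReal.ofReal (Real.exp (-(u^2/(8*κ))) *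
    (min v 1 ^ c₁ * v ^ (-α) * Real.exp (-(u - v) ^ 2 / (2*κ)))) with hg₂
  have hg₁meas : Measurable g₁ := by
    apply Measurable.indicator _ measurableSet_Ioo
    fun_prop
  -- pointwise bound
  have hpoint : ∀ v : ℝ, 0 < v →
      ENNReal.ofReal (min v 1 ^ c₁ * Real.exp (-(u - v) ^ 2 / κ) * v ^ (-α)) ≤ g₁ v + g₂ v := by
    intro v hv
    have hmv : 0 < min v 1 := lt_min hv one_pos
    by_cases hvI : v ∈ I
    · have h1 : min v 1 ^ c₁ ≤ 2 ^ |c₁| * min u 1 ^ c₁ := by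
        apply rpow_ratio c₁ hmv hmu
        · simp only [hI, mem_Ioo] at hvI
          rw [le_min_iff] at *
          constructor
          · calc min u 1 / 2 ≤ u / 2 := by have := min_le_left u 1; linarith
            _ ≤ v := hvI.1.le
          · calc min u 1 / 2 ≤ 1 / 2 := by have := min_le_right u 1; linarith
            _ ≤ 1 := by norm_num
        · simp only [hI, mem_Ioo] at hvI
          rw [min_le_iff]
          rcases le_total u 1 with h | h
          · left; rw [min_eq_left h]; linarith
          · right; rw [min_eq_right h]; have := min_le_right v 1; linarith
      have h2 : v ^ (-α) ≤ 2 ^ |α| * u ^ (-α) := by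
        have := rpow_ratio (-α) hv hu
          (by simp only [hI, mem_Ioo] at hvI; linarith)
          (by simp only [hI, mem_Ioo] at hvI; linarith)
        rwa [abs_neg] at this
      have hreal : min v 1 ^ c₁ * Real.exp (-(u - v) ^ 2 / κ) * v ^ (-α) ≤
          P₁ * Real.exp (-(u - v) ^ 2 / κ) := by
        rw [hP₁]
        calc min v 1 ^ c₁ * Real.exp (-(u - v) ^ 2 / κ) * v ^ (-α)
            ≤ (2 ^ |c₁| * min u 1 ^ c₁) * Real.exp (-(u - v) ^ 2 / κ) * (2 ^ |α| * u ^ (-α)) := by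
              apply mul_le_mul (mul_le_mul_of_nonneg_right h1 (Real.exp_nonneg _)) h2
                (Real.rpow_nonneg hv.le _) (by positivity)
        _ = 2 ^ |c₁| * min u 1 ^ c₁ * (2 ^ |α| * u ^ (-α)) * Real.exp (-(u - v) ^ 2 / κ) := by
              ring
      calc ENNReal.ofReal (min v 1 ^ c₁ * Real.exp (-(u - v) ^ 2 / κ) * v ^ (-α))
          ≤ ENNReal.ofReal (P₁ * Real.exp (-(u - v) ^ 2 / κ)) := ENNReal.ofReal_le_ofReal hreal
      _ = g₁ v := by rw [hg₁, indicator_of_mem hvI]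
      _ ≤ g₁ v + g₂ v := le_self_add
    · -- off the diagonal region
      have hsq : u^2/4 ≤ (u - v)^2 := by
        simp only [hI, mem_Ioo, not_and_or, not_lt] at hvI
        rcases hvI with h | h <;> nlinarith
      have hE : Real.exp (-(u - v) ^ 2 / κ) ≤
          Real.exp (-(u^2/(8*κ))) * Real.exp (-(u - v) ^ 2 / (2*κ)) := by
        rw [← Real.exp_add]
        apply Real.exp_le_exp.2
        have h1 : -(u - v)^2/κ = -(u - v)^2/(2*κ) + -(u - v)^2/(2*κ) := by
          field_simp
          ring
        have hstep : u^2/(8*κ) ≤ (u - v)^2/(2*κ) := by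
          rw [show u^2/(8*κ) = (u^2/4)/(2*κ) by ring]
          gcongr
        simp only [neg_div] at h1 ⊢
        linarith
      have hreal : min v 1 ^ c₁ * Real.exp (-(u - v) ^ 2 / κ) * v ^ (-α) ≤
          Real.exp (-(u^2/(8*κ))) * (min v 1 ^ c₁ * v ^ (-α) * Real.exp (-(u - v) ^ 2 / (2*κ))) := by
        calc min v 1 ^ c₁ * Real.exp (-(u - v) ^ 2 / κ) * v ^ (-α)
            ≤ min v 1 ^ c₁ * (Real.exp (-(u^2/(8*κ))) * Real.exp (-(u - v) ^ 2 / (2*κ))) * v ^ (-α) := by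
              apply mul_le_mul_of_nonneg_right (mul_le_mul_of_nonneg_left hE (by positivity))
                (Real.rpow_nonneg hv.le _)
        _ = Real.exp (-(u^2/(8*κ))) * (min v 1 ^ c₁ * v ^ (-α) * Real.exp (-(u - v) ^ 2 / (2*κ))) := by
              ring
      calc ENNReal.ofReal (min v 1 ^ c₁ * Real.exp (-(u - v) ^ 2 / κ) * v ^ (-α))
          ≤ g₂ v := ENNReal.ofReal_le_ofReal hreal
      _ ≤ g₁ v + g₂ v := le_add_self

  -- split the integral
  have hmono : (∫⁻ v in Ioi (0:ℝ),
        ENNReal.ofReal (min v 1 ^ c₁ * Real.exp (-(u - v) ^ 2 / κ) * v ^ (-α)))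
      ≤ (∫⁻ v in Ioi (0:ℝ), g₁ v) + ∫⁻ v in Ioi (0:ℝ), g₂ v := by
    rw [← lintegral_add_left hg₁meas]
    exact lintegral_mono_ae ((ae_restrict_mem measurableSet_Ioi).mono (fun v hv => hpoint v hv))
  have hexp_le_one : ∀ (w κ' : ℝ), 0 < κ' → Real.exp (-(u - w) ^ 2 / κ') ≤ 1 := by
    intro w κ' hκ'
    apply Real.exp_le_one_iff.2
    apply div_nonpos_of_nonpos_of_nonneg (neg_nonpos.2 (sq_nonneg _)) hκ'.le
  -- region A
  have hIA : ENNReal.ofReal (min u 1 ^ c₂) * ∫⁻ v in Ioi (0:ℝ), g₁ v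
      ≤ ENNReal.ofReal (KA * u ^ (-α)) := by
    have hsplit : ∫⁻ v in Ioi (0:ℝ), g₁ v
        = ENNReal.ofReal P₁ * ∫⁻ v in I ∩ Ioi 0, ENNReal.ofReal (Real.exp (-(u - v) ^ 2 / κ)) := by
      rw [hg₁, lintegral_indicator measurableSet_Ioo, Measure.restrict_restrict measurableSet_Ioo]
      simp_rw [ENNReal.ofReal_mul hP₁nonneg]
      rw [lintegral_const_mul _ (by fun_prop)]
    have hb1 : ∫⁻ v in I ∩ Ioi 0, ENNReal.ofReal (Real.exp (-(u - v) ^ 2 / κ))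
        ≤ ENNReal.ofReal G1 := hG1 u _
    have hb2 : ∫⁻ v in I ∩ Ioi 0, ENNReal.ofReal (Real.exp (-(u - v) ^ 2 / κ))
        ≤ ENNReal.ofReal u := by
      calc ∫⁻ v in I ∩ Ioi 0, ENNReal.ofReal (Real.exp (-(u - v) ^ 2 / κ))
          ≤ ∫⁻ _ in I ∩ Ioi 0, 1 := lintegral_mono (fun v => by
            simpa using ENNReal.ofReal_le_ofReal (hexp_le_one v κ hκ))
      _ = volume (I ∩ Ioi 0) := setLIntegral_one _
      _ ≤ volume I := measure_mono inter_subset_left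
      _ = ENNReal.ofReal u := by rw [hI, Real.volume_Ioo]; congr 1; ring
    rcases le_total u 1 with hu1 | hu1
    · have hlhs : ENNReal.ofReal (min u 1 ^ c₂) * ∫⁻ v in Ioi (0:ℝ), g₁ v
          ≤ ENNReal.ofReal (min u 1 ^ c₂ * (P₁ * u)) := by
        rw [hsplit, ENNReal.ofReal_mul (show (0:ℝ) ≤ min u 1 ^ c₂ by positivity),
          ENNReal.ofReal_mul hP₁nonneg]
        exact mul_le_mul_right (mul_le_mul_right hb2 _) _
      refine hlhs.trans (ENNReal.ofReal_le_ofReal ?_)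
      rw [hP₁, hKA, min_eq_left hu1]
      have hcomb : u ^ c₂ * (u ^ c₁ * u) = u ^ (c₂ + (c₁ + 1)) := by
        rw [Real.rpow_add hu, Real.rpow_add hu, Real.rpow_one]
      have h1 : u ^ (c₂ + (c₁ + 1)) ≤ 1 := Real.rpow_le_one hu.le hu1 (by linarith)
      calc u ^ c₂ * (2 ^ |c₁| * u ^ c₁ * (2 ^ |α| * u ^ (-α)) * u)
          = 2 ^ |c₁| * 2 ^ |α| * (u ^ (c₂ + (c₁ + 1)) * u ^ (-α)) := by rw [← hcomb]; ring
      _ ≤ 2 ^ |c₁| * 2 ^ |α| * (1 * u ^ (-α)) := by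
          gcongr <;> first | exact h1 | positivity
      _ ≤ 2 ^ |c₁| * 2 ^ |α| * (max G1 1 * u ^ (-α)) := by
          gcongr <;> first | exact le_max_right _ _ | positivity
      _ = 2 ^ |c₁| * 2 ^ |α| * max G1 1 * u ^ (-α) := by ring
    · have hlhs : ENNReal.ofReal (min u 1 ^ c₂) * ∫⁻ v in Ioi (0:ℝ), g₁ v
          ≤ ENNReal.ofReal (min u 1 ^ c₂ * (P₁ * G1)) := by
        rw [hsplit, ENNReal.ofReal_mul (show (0:ℝ) ≤ min u 1 ^ c₂ by positivity),
          ENNReal.ofReal_mul hP₁nonneg]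
        exact mul_le_mul_right (mul_le_mul_right hb1 _) _
      refine hlhs.trans (ENNReal.ofReal_le_ofReal ?_)
      rw [hP₁, hKA, min_eq_right hu1]
      simp only [Real.one_rpow, one_mul, mul_one]
      calc 2 ^ |c₁| * (2 ^ |α| * u ^ (-α)) * G1
          = 2 ^ |c₁| * 2 ^ |α| * (G1 * u ^ (-α)) := by ring
      _ ≤ 2 ^ |c₁| * 2 ^ |α| * (max G1 1 * u ^ (-α)) := by
          gcongr <;> first | exact le_max_left _ _ | positivity
      _ = 2 ^ |c₁| * 2 ^ |α| * max G1 1 * u ^ (-α) := by ring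
  -- region B
  have hIB : ENNReal.ofReal (min u 1 ^ c₂) * ∫⁻ v in Ioi (0:ℝ), g₂ v
      ≤ ENNReal.ofReal (KB * u ^ (-α)) := by
    have hpull : ∫⁻ v in Ioi (0:ℝ), g₂ v = ENNReal.ofReal (Real.exp (-(u^2/(8*κ)))) *
        ∫⁻ v in Ioi (0:ℝ),
          ENNReal.ofReal (min v 1 ^ c₁ * v ^ (-α) * Real.exp (-(u - v)^2/(2*κ))) := by
      rw [hg₂]
      simp_rw [ENNReal.ofReal_mul (Real.exp_nonneg _)]
      rw [lintegral_const_mul _ (by fun_prop)]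
    have hpiece1 : ∫⁻ v in Ioc (0:ℝ) 1,
        ENNReal.ofReal (min v 1 ^ c₁ * v ^ (-α) * Real.exp (-(u - v)^2/(2*κ)))
        ≤ ENNReal.ofReal D₀ := by
      rw [← hD₀int]
      apply lintegral_mono_ae
      apply (ae_restrict_mem measurableSet_Ioc).mono
      intro v hv
      apply ENNReal.ofReal_le_ofReal
      rw [min_eq_left hv.2]
      calc v ^ c₁ * v ^ (-α) * Real.exp (-(u - v)^2/(2*κ)) ≤ v ^ c₁ * v ^ (-α) * 1 := by
            gcongr
            · exact mul_nonneg (Real.rpow_nonneg hv.1.le _) (Real.rpow_nonneg hv.1.le _)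
            · exact hexp_le_one v (2*κ) (by linarith)
      _ = v ^ (c₁ - α) := by rw [mul_one, ← Real.rpow_add hv.1]; ring_nf
    have hpiece2 : ∫⁻ v in Ioi (1:ℝ),
        ENNReal.ofReal (min v 1 ^ c₁ * v ^ (-α) * Real.exp (-(u - v)^2/(2*κ)))
        ≤ ENNReal.ofReal ((1 + 2^|α| * u^|α|) * G2) + ENNReal.ofReal ((2^|α| * S) * G4) := by
      have hpoint2 : ∀ v ∈ Ioi (1:ℝ),
          ENNReal.ofReal (min v 1 ^ c₁ * v ^ (-α) * Real.exp (-(u - v)^2/(2*κ)))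
          ≤ ENNReal.ofReal ((1 + 2^|α| * u^|α|) * Real.exp (-(u - v)^2/(2*κ)))
            + ENNReal.ofReal ((2^|α| * S) * Real.exp (-(u - v)^2/(4*κ))) := by
        intro v hv
        rw [mem_Ioi] at hv
        have hv0 : (0:ℝ) < v := by linarith
        rw [min_eq_right hv.le, Real.one_rpow, one_mul]
        rw [← ENNReal.ofReal_add (by positivity) (by positivity)]
        apply ENNReal.ofReal_le_ofReal
        have hvbound : v ^ (-α) ≤ (1 + 2^|α| * u^|α|) + 2^|α| * |u - v|^|α| := by
          have habs : (0:ℝ) ≤ 2^|α| * u^|α| := by positivity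
          have habs2 : (0:ℝ) ≤ 2^|α| * |u - v|^|α| := by positivity
          rcases le_or_gt 0 α with hα | hα
          · have : v ^ (-α) ≤ 1 :=
              Real.rpow_le_one_of_one_le_of_nonpos hv.le (neg_nonpos.2 hα)
            linarith
          · have habsα : |α| = -α := abs_of_neg hα
            rw [← habsα]
            have h1 : v ≤ u + |u - v| := by
              have := le_abs_self (v - u)
              rw [abs_sub_comm] at this
              linarith
            have h2 : v ^ |α| ≤ (u + |u - v|) ^ |α| :=
              Real.rpow_le_rpow hv0.le h1 (abs_nonneg _)
            have h3 : (u + |u - v|) ^ |α| ≤ (2 * max u |u - v|) ^ |α| := by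
              apply Real.rpow_le_rpow (by positivity) _ (abs_nonneg _)
              have := le_max_left u |u - v|
              have := le_max_right u |u - v|
              linarith
            have h4 : (2 * max u |u - v|) ^ |α| = 2^|α| * (max u |u - v|)^|α| :=
              Real.mul_rpow (by norm_num) (le_max_of_le_left hu.le)
            have h5 : (max u |u - v|)^|α| ≤ u^|α| + |u - v|^|α| := by
              rcases max_cases u |u - v| with ⟨h, _⟩ | ⟨h, _⟩ <;> rw [h]
              · nlinarith [Real.rpow_nonneg (abs_nonneg (u - v)) |α|]
              · nlinarith [Real.rpow_nonneg hu.le |α|]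
            calc v ^ |α| ≤ 2^|α| * (max u |u - v|)^|α| := by rw [← h4]; exact h2.trans h3
            _ ≤ 2^|α| * (u^|α| + |u - v|^|α|) := by
                apply mul_le_mul_of_nonneg_left h5 (by positivity)
            _ ≤ (1 + 2^|α| * u^|α|) + 2^|α| * |u - v|^|α| := by ring_nf; linarith
        have hgauss_split : |u - v|^|α| * Real.exp (-(u - v)^2/(2*κ)) ≤
            S * Real.exp (-(u - v)^2/(4*κ)) := by
          have he : Real.exp (-(u - v)^2/(2*κ)) =
              Real.exp (-(1/(4*κ) * |u - v|^2)) * Real.exp (-(u - v)^2/(4*κ)) := by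
            rw [← Real.exp_add, sq_abs]
            congr 1
            field_simp
            ring
          rw [he, ← mul_assoc]
          exact mul_le_mul_of_nonneg_right (hS |u - v| (abs_nonneg _)) (Real.exp_nonneg _)
        calc v ^ (-α) * Real.exp (-(u - v)^2/(2*κ))
            ≤ ((1 + 2^|α| * u^|α|) + 2^|α| * |u - v|^|α|) * Real.exp (-(u - v)^2/(2*κ)) :=
              mul_le_mul_of_nonneg_right hvbound (Real.exp_nonneg _)
        _ = (1 + 2^|α| * u^|α|) * Real.exp (-(u - v)^2/(2*κ))
              + 2^|α| * (|u - v|^|α| * Real.exp (-(u - v)^2/(2*κ))) := by ring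
        _ ≤ (1 + 2^|α| * u^|α|) * Real.exp (-(u - v)^2/(2*κ))
              + 2^|α| * (S * Real.exp (-(u - v)^2/(4*κ))) := by
            have : (0:ℝ) ≤ 2^|α| := Real.rpow_nonneg (by norm_num) _
            nlinarith [hgauss_split]
        _ = (1 + 2^|α| * u^|α|) * Real.exp (-(u - v)^2/(2*κ))
              + (2^|α| * S) * Real.exp (-(u - v)^2/(4*κ)) := by ring
      calc ∫⁻ v in Ioi (1:ℝ),
            ENNReal.ofReal (min v 1 ^ c₁ * v ^ (-α) * Real.exp (-(u - v)^2/(2*κ)))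
          ≤ ∫⁻ v in Ioi (1:ℝ),
            (ENNReal.ofReal ((1 + 2^|α| * u^|α|) * Real.exp (-(u - v)^2/(2*κ)))
              + ENNReal.ofReal ((2^|α| * S) * Real.exp (-(u - v)^2/(4*κ)))) :=
            lintegral_mono_ae ((ae_restrict_mem measurableSet_Ioi).mono hpoint2)
      _ = (∫⁻ v in Ioi (1:ℝ), ENNReal.ofReal ((1 + 2^|α| * u^|α|) * Real.exp (-(u - v)^2/(2*κ))))
            + ∫⁻ v in Ioi (1:ℝ), ENNReal.ofReal ((2^|α| * S) * Real.exp (-(u - v)^2/(4*κ))) :=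
            lintegral_add_left (by fun_prop) _
      _ ≤ ENNReal.ofReal ((1 + 2^|α| * u^|α|) * G2) + ENNReal.ofReal ((2^|α| * S) * G4) := by
          apply add_le_add
          · simp_rw [ENNReal.ofReal_mul (show (0:ℝ) ≤ 1 + 2^|α| * u^|α| by positivity)]
            rw [lintegral_const_mul _ (by fun_prop)]
            exact mul_le_mul_right (hG2 u _) _
          · simp_rw [ENNReal.ofReal_mul (show (0:ℝ) ≤ 2^|α| * S by positivity)]
            rw [lintegral_const_mul _ (by fun_prop)]
            exact mul_le_mul_right (hG4 u _) _
    have hsplitB : ∫⁻ v in Ioi (0:ℝ),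
        ENNReal.ofReal (min v 1 ^ c₁ * v ^ (-α) * Real.exp (-(u - v)^2/(2*κ)))
        ≤ ENNReal.ofReal (E₁ + E₂ * u ^ |α|) := by
      have hdecomp : Ioi (0:ℝ) = Ioc 0 1 ∪ Ioi 1 := (Ioc_union_Ioi_eq_Ioi zero_le_one).symm
      rw [hdecomp, lintegral_union measurableSet_Ioi (Ioc_disjoint_Ioi le_rfl)]
      calc (∫⁻ v in Ioc (0:ℝ) 1,
            ENNReal.ofReal (min v 1 ^ c₁ * v ^ (-α) * Real.exp (-(u - v)^2/(2*κ))))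
            + ∫⁻ v in Ioi (1:ℝ),
              ENNReal.ofReal (min v 1 ^ c₁ * v ^ (-α) * Real.exp (-(u - v)^2/(2*κ)))
          ≤ ENNReal.ofReal D₀
            + (ENNReal.ofReal ((1 + 2^|α| * u^|α|) * G2) + ENNReal.ofReal ((2^|α| * S) * G4)) :=
            add_le_add hpiece1 hpiece2
      _ = ENNReal.ofReal (D₀ + ((1 + 2^|α| * u^|α|) * G2 + (2^|α| * S) * G4)) := by
          rw [← ENNReal.ofReal_add (by positivity) (by positivity),
            ← ENNReal.ofReal_add hD₀nonneg (by positivity)]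
      _ = ENNReal.ofReal (E₁ + E₂ * u ^ |α|) := by
          congr 1
          rw [hE₁, hE₂]
          ring
    -- final real inequality for region B
    have hfinal : Real.exp (-(u^2/(8*κ))) * (E₁ + E₂ * u ^ |α|) * min u 1 ^ c₂
        ≤ KB * u ^ (-α) := by
      rcases le_total u 1 with hu1 | hu1
      · have h1 : Real.exp (-(u^2/(8*κ))) ≤ 1 :=
          Real.exp_le_one_iff.2 (neg_nonpos.mpr (by positivity))
        have h2 : u ^ |α| ≤ 1 := Real.rpow_le_one hu.le hu1 (abs_nonneg _)
        have h3 : u ^ (c₂ + α) ≤ 1 := Real.rpow_le_one hu.le hu1 hα₂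
        rw [min_eq_left hu1]
        have h4 : u ^ c₂ = u ^ (-α) * u ^ (c₂ + α) := by
          rw [← Real.rpow_add hu]; ring_nf
        calc Real.exp (-(u^2/(8*κ))) * (E₁ + E₂ * u ^ |α|) * u ^ c₂
            ≤ 1 * (E₁ + E₂ * 1) * u ^ c₂ := by
              gcongr <;> first | exact h1 | exact h2 | positivity | linarith [hE₂pos]
        _ = (E₁ + E₂) * (u ^ (-α) * u ^ (c₂ + α)) := by rw [← h4]; ring
        _ ≤ (E₁ + E₂) * (u ^ (-α) * 1) := by
            gcongr <;> first | exact h3 | positivity | linarith [hE₁pos, hE₂pos]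
        _ ≤ KB * u ^ (-α) := by
            rw [mul_one, hKB]
            have := Real.rpow_nonneg hu.le (-α)
            nlinarith [mul_pos hE₁pos hS1pos, mul_pos hE₂pos hS2pos]
      · rw [min_eq_right hu1, Real.one_rpow, mul_one]
        have hneg : u ^ (-|α|) ≤ u ^ (-α) :=
          Real.rpow_le_rpow_of_exponent_le hu1 (neg_le_neg (le_abs_self α))
        have hupos : (0:ℝ) < u ^ |α| := Real.rpow_pos_of_pos hu _
        have key : Real.exp (-(u^2/(8*κ))) * (E₁ + E₂ * u ^ |α|) * u ^ |α| ≤ KB := by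
          have he8 : Real.exp (-(u^2/(8*κ))) = Real.exp (-(1/(8*κ) * u^2)) := by
            congr 1; field_simp
          have hs1 := hS1 u hu.le
          have hs2 := hS2 u hu.le
          have hdouble : u ^ |α| * u ^ |α| = u ^ (2*|α|) := by
            rw [← Real.rpow_add hu]; ring_nf
          calc Real.exp (-(u^2/(8*κ))) * (E₁ + E₂ * u ^ |α|) * u ^ |α|
              = E₁ * (u ^ |α| * Real.exp (-(1/(8*κ) * u^2)))
                + E₂ * (u ^ (2*|α|) * Real.exp (-(1/(8*κ) * u^2))) := by
                rw [← he8, ← hdouble]; ring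
          _ ≤ E₁ * S1 + E₂ * S2 := by
              apply add_le_add
              · exact mul_le_mul_of_nonneg_left (hS1 u hu.le) hE₁pos.le
              · exact mul_le_mul_of_nonneg_left (hS2 u hu.le) hE₂pos.le
          _ ≤ KB := by rw [hKB]; linarith [hE₁pos, hE₂pos]
        calc Real.exp (-(u^2/(8*κ))) * (E₁ + E₂ * u ^ |α|)
            ≤ KB * u ^ (-|α|) := by
              rw [Real.rpow_neg hu.le, ← div_eq_mul_inv, le_div_iff₀ hupos]
              exact key
        _ ≤ KB * u ^ (-α) := mul_le_mul_of_nonneg_left hneg hKBpos.le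
    calc ENNReal.ofReal (min u 1 ^ c₂) * ∫⁻ v in Ioi (0:ℝ), g₂ v
        ≤ ENNReal.ofReal (min u 1 ^ c₂) * (ENNReal.ofReal (Real.exp (-(u^2/(8*κ)))) *
            ENNReal.ofReal (E₁ + E₂ * u ^ |α|)) := by
          rw [hpull]
          exact mul_le_mul_right (mul_le_mul_right hsplitB _) _
    _ = ENNReal.ofReal (Real.exp (-(u^2/(8*κ))) * (E₁ + E₂ * u ^ |α|) * min u 1 ^ c₂) := by
        rw [← ENNReal.ofReal_mul (Real.exp_nonneg _), ← ENNReal.ofReal_mul (by positivity),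
          mul_comm]
    _ ≤ ENNReal.ofReal (KB * u ^ (-α)) := ENNReal.ofReal_le_ofReal hfinal
  calc ENNReal.ofReal (min u 1 ^ c₂) *
        ∫⁻ v in Ioi (0:ℝ), ENNReal.ofReal (min v 1 ^ c₁ * Real.exp (-(u - v) ^ 2 / κ) * v ^ (-α))
      ≤ ENNReal.ofReal (min u 1 ^ c₂) * ((∫⁻ v in Ioi (0:ℝ), g₁ v) + ∫⁻ v in Ioi (0:ℝ), g₂ v) :=
        mul_le_mul_right hmono _
  _ = ENNReal.ofReal (min u 1 ^ c₂) * (∫⁻ v in Ioi (0:ℝ), g₁ v)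
      + ENNReal.ofReal (min u 1 ^ c₂) * ∫⁻ v in Ioi (0:ℝ), g₂ v := mul_add _ _ _
  _ ≤ ENNReal.ofReal (KA * u ^ (-α)) + ENNReal.ofReal (KB * u ^ (-α)) := add_le_add hIA hIB
  _ = ENNReal.ofReal ((KA + KB) * u ^ (-α)) := by
      rw [← ENNReal.ofReal_add (by positivity) (by positivity)]
      congr 1
      ring


lemma schur (μ : Measure ℝ) [SFinite μ] {p q : ℝ} (hpq : p.HolderConjugate q)
    (K : ℝ → ℝ → ℝ≥0∞) (hK : Measurable (Function.uncurry K))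
    (h : ℝ → ℝ≥0∞) (hh : Measurable h) (hh0 : ∀ᵐ y ∂μ, h y ≠ 0 ∧ h y ≠ ⊤)
    {A : ℝ≥0∞} (hA0 : A ≠ 0) (hAtop : A ≠ ⊤)
    (H1 : ∀ᵐ y ∂μ, (∫⁻ ρ, K y ρ * h ρ ^ q ∂μ) ≤ A * h y ^ q)
    (H2 : ∀ᵐ ρ ∂μ, (∫⁻ y, K y ρ * h y ^ p ∂μ) ≤ A * h ρ ^ p)
    (F : ℝ → ℝ≥0∞) (hF : AEMeasurable F μ) :
    ∫⁻ y, (∫⁻ ρ, K y ρ * F ρ ∂μ) ^ p ∂μ ≤ A ^ p * ∫⁻ ρ, F ρ ^ p ∂μ := by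
  have hp1 : 1 < p := hpq.lt
  have hp0 : 0 < p := hpq.pos
  have hq0 : 0 < q := hpq.symm.pos
  have hKy : ∀ y, Measurable (K y) := fun y => hK.of_uncurry_left
  have hdivq : p / q = p - 1 := by
    have hinv := hpq.inv_add_inv_eq_one
    have hq' : q⁻¹ = 1 - p⁻¹ := by linarith
    rw [div_eq_mul_inv, hq', mul_sub, mul_inv_cancel₀ hp0.ne', mul_one]
  -- pointwise Hölder estimate
  have hHolder : ∀ᵐ y ∂μ, (∫⁻ ρ, K y ρ * F ρ ∂μ) ^ p ≤
      A ^ (p/q) * h y ^ p * ∫⁻ ρ, K y ρ * (F ρ ^ p * (h ρ)⁻¹ ^ p) ∂μ := by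
    filter_upwards [H1] with y hy1
    set f : ℝ → ℝ≥0∞ := fun ρ => (K y ρ) ^ (1/p) * (F ρ * (h ρ)⁻¹) with hf
    set g : ℝ → ℝ≥0∞ := fun ρ => (K y ρ) ^ (1/q) * h ρ with hg
    have hsplit : ∀ᵐ ρ ∂μ, K y ρ * F ρ = f ρ * g ρ := by
      filter_upwards [hh0] with ρ hρ
      obtain ⟨hρ0, hρtop⟩ := hρ
      have hKK : (K y ρ) ^ (1/p) * (K y ρ) ^ (1/q) = K y ρ := by
        rw [← ENNReal.rpow_add_of_nonneg _ _ (by positivity) (by positivity),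
          one_div, one_div, hpq.inv_add_inv_eq_one, ENNReal.rpow_one]
      have : f ρ * g ρ = ((K y ρ) ^ (1/p) * (K y ρ) ^ (1/q)) * (F ρ * ((h ρ)⁻¹ * h ρ)) := by
        rw [hf, hg]; ring
      rw [this, hKK, ENNReal.inv_mul_cancel hρ0 hρtop, mul_one]
    have hfm : AEMeasurable f μ := by
      apply AEMeasurable.mul
      · exact ((hKy y).pow_const (1/p)).aemeasurable
      · exact hF.mul (hh.aemeasurable.inv)
    have hgm : AEMeasurable g μ := ((hKy y).pow_const (1/q)).aemeasurable.mul hh.aemeasurable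
    have hHo := ENNReal.lintegral_mul_le_Lp_mul_Lq μ hpq hfm hgm
    have hfp : ∀ ρ, f ρ ^ p = K y ρ * (F ρ ^ p * (h ρ)⁻¹ ^ p) := by
      intro ρ
      rw [hf]
      rw [ENNReal.mul_rpow_of_nonneg _ _ hp0.le, ENNReal.mul_rpow_of_nonneg _ _ hp0.le,
        ← ENNReal.rpow_mul, one_div, inv_mul_cancel₀ hp0.ne', ENNReal.rpow_one]
    have hgq : ∀ ρ, g ρ ^ q = K y ρ * h ρ ^ q := by
      intro ρ
      rw [hg, ENNReal.mul_rpow_of_nonneg _ _ hq0.le, ← ENNReal.rpow_mul, one_div,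
        inv_mul_cancel₀ hq0.ne', ENNReal.rpow_one]
    have key : (∫⁻ ρ, K y ρ * F ρ ∂μ) ≤
        (∫⁻ ρ, K y ρ * (F ρ ^ p * (h ρ)⁻¹ ^ p) ∂μ) ^ (1/p) * (A ^ (1/q) * h y) := by
      calc (∫⁻ ρ, K y ρ * F ρ ∂μ) = ∫⁻ ρ, f ρ * g ρ ∂μ := lintegral_congr_ae hsplit
      _ ≤ (∫⁻ ρ, f ρ ^ p ∂μ) ^ (1/p) * (∫⁻ ρ, g ρ ^ q ∂μ) ^ (1/q) := hHo
      _ = (∫⁻ ρ, K y ρ * (F ρ ^ p * (h ρ)⁻¹ ^ p) ∂μ) ^ (1/p)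
            * (∫⁻ ρ, K y ρ * h ρ ^ q ∂μ) ^ (1/q) := by
          simp_rw [hfp, hgq]
      _ ≤ (∫⁻ ρ, K y ρ * (F ρ ^ p * (h ρ)⁻¹ ^ p) ∂μ) ^ (1/p) * (A * h y ^ q) ^ (1/q) := by
          gcongr
      _ = (∫⁻ ρ, K y ρ * (F ρ ^ p * (h ρ)⁻¹ ^ p) ∂μ) ^ (1/p) * (A ^ (1/q) * h y) := by
          rw [ENNReal.mul_rpow_of_nonneg _ _ (by positivity), ← ENNReal.rpow_mul,
            mul_one_div, div_self hq0.ne', ENNReal.rpow_one]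
    calc (∫⁻ ρ, K y ρ * F ρ ∂μ) ^ p
        ≤ ((∫⁻ ρ, K y ρ * (F ρ ^ p * (h ρ)⁻¹ ^ p) ∂μ) ^ (1/p) * (A ^ (1/q) * h y)) ^ p :=
          ENNReal.rpow_le_rpow key hp0.le
    _ = A ^ (p/q) * h y ^ p * ∫⁻ ρ, K y ρ * (F ρ ^ p * (h ρ)⁻¹ ^ p) ∂μ := by
        rw [ENNReal.mul_rpow_of_nonneg _ _ hp0.le, ENNReal.mul_rpow_of_nonneg _ _ hp0.le,
          ← ENNReal.rpow_mul, ← ENNReal.rpow_mul, show (1:ℝ)/p * p = 1 by field_simp,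
          show (1:ℝ)/q * p = p / q by ring, ENNReal.rpow_one]
        ring

  set C : ℝ → ℝ≥0∞ := fun ρ => F ρ ^ p * (h ρ)⁻¹ ^ p with hC
  have hCm : AEMeasurable C μ := (hF.pow_const p).mul ((hh.aemeasurable.inv).pow_const p)
  have hswap_meas : AEMeasurable (fun z : ℝ × ℝ => h z.1 ^ p * (K z.1 z.2 * C z.2)) (μ.prod μ) :=
    ((hh.comp measurable_fst).pow_const p).aemeasurable.mul (hK.aemeasurable.mul hCm.comp_snd)
  have step1 : ∀ y : ℝ, A ^ (p/q) * h y ^ p * ∫⁻ ρ, K y ρ * C ρ ∂μ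
      = A ^ (p/q) * ∫⁻ ρ, h y ^ p * (K y ρ * C ρ) ∂μ := by
    intro y
    rw [lintegral_const_mul'' (h y ^ p) (f := fun ρ => K y ρ * C ρ) ((hKy y).aemeasurable.mul hCm), mul_assoc]
  calc ∫⁻ y, (∫⁻ ρ, K y ρ * F ρ ∂μ) ^ p ∂μ
      ≤ ∫⁻ y, A ^ (p/q) * h y ^ p * ∫⁻ ρ, K y ρ * C ρ ∂μ ∂μ := lintegral_mono_ae hHolder
  _ = A ^ (p/q) * ∫⁻ y, ∫⁻ ρ, h y ^ p * (K y ρ * C ρ) ∂μ ∂μ := by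
      simp_rw [step1]
      exact lintegral_const_mul' _ _ (ENNReal.rpow_ne_top_of_nonneg (by positivity) hAtop)
  _ = A ^ (p/q) * ∫⁻ ρ, ∫⁻ y, h y ^ p * (K y ρ * C ρ) ∂μ ∂μ := by
      rw [lintegral_lintegral_swap hswap_meas]
  _ = A ^ (p/q) * ∫⁻ ρ, (∫⁻ y, K y ρ * h y ^ p ∂μ) * C ρ ∂μ := by
      congr 1
      apply lintegral_congr fun ρ => ?_
      rw [show (fun y => h y ^ p * (K y ρ * C ρ)) = fun y => (K y ρ * h y ^ p) * C ρ from
        funext fun y => by ring]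
      exact lintegral_mul_const'' _ ((hK.of_uncurry_right.mul (hh.pow_const p)).aemeasurable)
  _ ≤ A ^ (p/q) * ∫⁻ ρ, (A * h ρ ^ p) * C ρ ∂μ := by
      apply mul_le_mul_right
      apply lintegral_mono_ae
      filter_upwards [H2] with ρ h2
      exact mul_le_mul_left h2 _
  _ = A ^ (p/q) * (A * ∫⁻ ρ, h ρ ^ p * C ρ ∂μ) := by
      simp_rw [mul_assoc]
      rw [lintegral_const_mul' A _ hAtop]
  _ = A ^ (p/q) * (A * ∫⁻ ρ, F ρ ^ p ∂μ) := by
      congr 2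
      apply lintegral_congr_ae
      filter_upwards [hh0] with ρ hρ
      obtain ⟨h0, htop⟩ := hρ
      rw [hC, show h ρ ^ p * (F ρ ^ p * (h ρ)⁻¹ ^ p) = (h ρ * (h ρ)⁻¹) ^ p * F ρ ^ p from by
        rw [ENNReal.mul_rpow_of_nonneg _ _ hp0.le]; ring,
        ENNReal.mul_inv_cancel h0 htop, ENNReal.one_rpow, one_mul]
  _ = A ^ p * ∫⁻ ρ, F ρ ^ p ∂μ := by
      have hAA : A ^ (p/q) * A = A ^ p := by
        nth_rewrite 2 [← ENNReal.rpow_one A]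
        rw [← ENNReal.rpow_add _ _ hA0 hAtop, hdivq,
          show p - 1 + 1 = p by ring]
      rw [← mul_assoc, hAA]


lemma scaled_bound (κ c₁ c₂ α : ℝ) (hκ : 0 < κ) (hc : -1 < c₁ + c₂) (hα₁ : α < c₁ + 1)
    (hα₂ : 0 ≤ c₂ + α) :
    ∃ A : ℝ, 0 < A ∧ ∀ t : ℝ, 0 < t → ∀ x : ℝ, 0 < x →
      ENNReal.ofReal (min (x / Real.sqrt t) 1 ^ c₂) *
        ∫⁻ v in Ioi (0:ℝ), ENNReal.ofReal (t ^ (-(1:ℝ)/2) * min (v / Real.sqrt t) 1 ^ c₁ *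
          Real.exp (-(x - v) ^ 2 / (κ * t)) * v ^ (-α)) ≤
      ENNReal.ofReal (A * x ^ (-α)) := by
  obtain ⟨A, hApos, hA⟩ := keyU κ c₁ c₂ α hκ hc hα₁ hα₂
  refine ⟨A, hApos, fun t ht x hx => ?_⟩
  set s : ℝ := Real.sqrt t with hs
  have hspos : 0 < s := Real.sqrt_pos.2 ht
  have hs2 : s ^ 2 = t := Real.sq_sqrt ht.le
  have hu : 0 < x / s := div_pos hx hspos
  -- rescale the integral
  have hscale := lintegral_scale s hspos (fun v => ENNReal.ofReal (t ^ (-(1:ℝ)/2) *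
    min (v / s) 1 ^ c₁ * Real.exp (-(x - v) ^ 2 / (κ * t)) * v ^ (-α)))
  have hcongr : ∀ w ∈ Ioi (0:ℝ),
      ENNReal.ofReal (t ^ (-(1:ℝ)/2) * min ((s * w) / s) 1 ^ c₁ *
        Real.exp (-(x - s * w) ^ 2 / (κ * t)) * (s * w) ^ (-α))
      = ENNReal.ofReal (t ^ (-(1:ℝ)/2) * s ^ (-α)) *
        ENNReal.ofReal (min w 1 ^ c₁ * Real.exp (-(x / s - w) ^ 2 / κ) * w ^ (-α)) := by
    intro w hw
    rw [mem_Ioi] at hw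
    have h1 : (s * w) / s = w := by field_simp
    have h2 : -(x - s * w) ^ 2 / (κ * t) = -(x / s - w) ^ 2 / κ := by
      rw [show x - s * w = s * (x / s - w) by field_simp, mul_pow, hs2]
      field_simp
    have h3 : (s * w) ^ (-α) = s ^ (-α) * w ^ (-α) := Real.mul_rpow hspos.le hw.le
    rw [h1, h2, h3, ← ENNReal.ofReal_mul (by positivity)]
    congr 1
    ring
  have hmeas : Measurable (fun w : ℝ =>
      ENNReal.ofReal (min w 1 ^ c₁ * Real.exp (-(x / s - w) ^ 2 / κ) * w ^ (-α))) := by fun_prop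
  have hmain : ∫⁻ v in Ioi (0:ℝ), ENNReal.ofReal (t ^ (-(1:ℝ)/2) * min (v / s) 1 ^ c₁ *
      Real.exp (-(x - v) ^ 2 / (κ * t)) * v ^ (-α))
      = ENNReal.ofReal (s * (t ^ (-(1:ℝ)/2) * s ^ (-α))) *
        ∫⁻ w in Ioi (0:ℝ),
          ENNReal.ofReal (min w 1 ^ c₁ * Real.exp (-(x / s - w) ^ 2 / κ) * w ^ (-α)) := by
    rw [hscale, setLIntegral_congr_fun measurableSet_Ioi
      hcongr, lintegral_const_mul _ hmeas,
      ENNReal.ofReal_mul hspos.le, mul_assoc]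
  rw [hmain]
  have hrearr : ENNReal.ofReal (min (x / s) 1 ^ c₂) *
      (ENNReal.ofReal (s * (t ^ (-(1:ℝ)/2) * s ^ (-α))) *
        ∫⁻ w in Ioi (0:ℝ),
          ENNReal.ofReal (min w 1 ^ c₁ * Real.exp (-(x / s - w) ^ 2 / κ) * w ^ (-α)))
      = ENNReal.ofReal (s * (t ^ (-(1:ℝ)/2) * s ^ (-α))) *
        (ENNReal.ofReal (min (x / s) 1 ^ c₂) *
          ∫⁻ w in Ioi (0:ℝ),
            ENNReal.ofReal (min w 1 ^ c₁ * Real.exp (-(x / s - w) ^ 2 / κ) * w ^ (-α))) := by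
    ring
  rw [hrearr]
  calc ENNReal.ofReal (s * (t ^ (-(1:ℝ)/2) * s ^ (-α))) *
        (ENNReal.ofReal (min (x / s) 1 ^ c₂) *
          ∫⁻ w in Ioi (0:ℝ),
            ENNReal.ofReal (min w 1 ^ c₁ * Real.exp (-(x / s - w) ^ 2 / κ) * w ^ (-α)))
      ≤ ENNReal.ofReal (s * (t ^ (-(1:ℝ)/2) * s ^ (-α))) *
        ENNReal.ofReal (A * (x / s) ^ (-α)) := mul_le_mul_right (hA (x / s) hu) _
  _ = ENNReal.ofReal (A * x ^ (-α)) := by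
      rw [← ENNReal.ofReal_mul (by positivity)]
      congr 1
      have hst : s * t ^ (-(1:ℝ)/2) = 1 := by
        rw [show (-(1:ℝ)/2) = -(1/2) by norm_num, Real.rpow_neg ht.le,
          ← Real.sqrt_eq_rpow, ← hs, mul_inv_cancel₀ hspos.ne']
      have hxs : s ^ (-α) * (x / s) ^ (-α) = x ^ (-α) := by
        rw [← Real.mul_rpow hspos.le (div_nonneg hx.le hspos.le), mul_div_cancel₀ _ hspos.ne']
      calc s * (t ^ (-(1:ℝ)/2) * s ^ (-α)) * (A * (x / s) ^ (-α))
          = A * ((s * t ^ (-(1:ℝ)/2)) * (s ^ (-α) * (x / s) ^ (-α))) := by ring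
      _ = A * x ^ (-α) := by rw [hst, hxs, one_mul]

end Aux15

open Aux15

set_option maxHeartbeats 1000000 in
/-- If the Bessel heat kernel `p_B` satisfies the Gaussian-type bound
`|p_B(t,y,ρ)| ≤ C t^{−1/2} ρ^{−c} ((ρ/√t) ∧ 1)^c exp(−|y−ρ|²/(κt))`, then for each
`t > 0` the integral operator `f ↦ ∫₀^∞ p_B(t,·,ρ) f(ρ) ρ^c dρ` is bounded on
`L^p((0,∞), y^m dy)` for `1 < p < ∞` with `0 < (m+1)/p < c+1`, with norm uniform in `t`. -/
theorem stmt_15 (c p m C κ : ℝ) (hc : -1 < c) (hp : 1 < p)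
    (hm1 : 0 < (m + 1) / p) (hm2 : (m + 1) / p < c + 1) (hC : 0 < C) (hκ : 0 < κ)
    (pB : ℝ → ℝ → ℝ → ℂ)
    (hker : ∀ t > (0 : ℝ), ∀ y > (0 : ℝ), ∀ ρ > (0 : ℝ),
      ‖pB t y ρ‖ ≤ C * t ^ (-(1 : ℝ) / 2) * ρ ^ (-c) * (min (ρ / Real.sqrt t) 1) ^ c *
        Real.exp (-(y - ρ) ^ 2 / (κ * t))) :
    ∃ M : NNReal, ∀ t > (0 : ℝ), ∀ f : ℝ → ℂ,
      MemLp f (ENNReal.ofReal p) (mu15 m) →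
      eLpNorm (fun y => ∫ ρ in Ioi (0 : ℝ), pB t y ρ * f ρ * ((ρ ^ c : ℝ) : ℂ))
          (ENNReal.ofReal p) (mu15 m) ≤
        M * eLpNorm f (ENNReal.ofReal p) (mu15 m) := by
  have hp0 : (0:ℝ) < p := by linarith
  -- conjugate exponent
  set q : ℝ := p / (p - 1) with hqdef
  have hpq : p.HolderConjugate q := Real.HolderConjugate.conjExponent hp
  have hq0 : 0 < q := hpq.symm.pos
  -- choice of the gauge exponent σ
  have hcp : m + 1 < (c + 1) * p := by
    have := (div_lt_iff₀ hp0).1 hm2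
    linarith
  have hlt1 : (m - c) / p < (c + 1) / q := by
    have hq' : (c + 1) / q = (c + 1) * (p - 1) / p := by
      rw [hqdef]
      have h1 : p ≠ 0 := by linarith
      have h2 : p - 1 ≠ 0 := by linarith
      field_simp
    rw [hq', div_lt_div_iff₀ hp0 hp0]
    nlinarith
  have hlt2 : (m - c) / p < (m + 1) / p := by
    rw [div_lt_div_iff₀ hp0 hp0]
    nlinarith
  have hmin0 : (0:ℝ) < min ((c + 1) / q) ((m + 1) / p) :=
    lt_min (div_pos (by linarith) hq0) hm1
  set σ : ℝ := (max 0 ((m - c) / p) + min ((c + 1) / q) ((m + 1) / p)) / 2 with hσdef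
  have hσlow : max 0 ((m - c) / p) < σ := by
    rw [hσdef]
    have : max 0 ((m - c) / p) < min ((c + 1) / q) ((m + 1) / p) := by
      rcases max_cases 0 ((m - c) / p) with ⟨h, _⟩ | ⟨h, _⟩ <;> rw [h]
      · exact hmin0
      · exact lt_min hlt1 hlt2
    linarith
  have hσhigh : σ < min ((c + 1) / q) ((m + 1) / p) := by
    rw [hσdef]
    have : max 0 ((m - c) / p) < min ((c + 1) / q) ((m + 1) / p) := by
      rcases max_cases 0 ((m - c) / p) with ⟨h, _⟩ | ⟨h, _⟩ <;> rw [h]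
      · exact hmin0
      · exact lt_min hlt1 hlt2
    linarith
  have hσpos : 0 < σ := (le_max_left 0 _).trans_lt hσlow
  have ha2 : σ * q < c + 1 := by
    have h1 : σ < (c + 1) / q := hσhigh.trans_le (min_le_left _ _)
    calc σ * q < ((c + 1) / q) * q := by exact mul_lt_mul_of_pos_right h1 hq0
    _ = c + 1 := by field_simp
  have hb1 : -c < σ * p - m := by
    have h1 : (m - c) / p < σ := (le_max_right _ _).trans_lt hσlow
    have h2 : m - c < σ * p := by
      calc m - c = ((m - c) / p) * p := by field_simp
      _ < σ * p := mul_lt_mul_of_pos_right h1 hp0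
    linarith
  have hb2 : σ * p - m < 1 := by
    have h1 : σ < (m + 1) / p := hσhigh.trans_le (min_le_right _ _)
    have h2 : σ * p < m + 1 := by
      calc σ * p < ((m + 1) / p) * p := mul_lt_mul_of_pos_right h1 hp0
      _ = m + 1 := by field_simp
    linarith
  -- the two Schur-condition bounds
  obtain ⟨A₁, hA₁pos, hA₁⟩ := scaled_bound κ c 0 (σ * q) hκ (by linarith) (by linarith)
    (by positivity)
  obtain ⟨A₂, hA₂pos, hA₂⟩ := scaled_bound κ 0 c (σ * p - m) hκ (by linarith) (by linarith)
    (by linarith)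
  set B : ℝ := C * max A₁ A₂ with hBdef
  have hBpos : 0 < B := by positivity
  refine ⟨B.toNNReal, fun t ht f hf => ?_⟩
  -- measure-theoretic setup
  haveI hsf : SigmaFinite ((volume : Measure ℝ).withDensity fun y => ENNReal.ofReal (y ^ m)) :=
    SigmaFinite.withDensity_of_ne_top' (fun y => ENNReal.ofReal_ne_top)
  haveI hsf2 : SFinite (mu15 m) := by unfold mu15; infer_instance
  have hmu : ∀ g : ℝ → ℝ≥0∞, ∫⁻ y, g y ∂(mu15 m)
      = ∫⁻ y in Ioi (0:ℝ), ENNReal.ofReal (y ^ m) * g y := by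
    intro g
    rw [mu15, restrict_withDensity measurableSet_Ioi,
      lintegral_withDensity_eq_lintegral_mul_non_measurable _ (by fun_prop)
        (Filter.Eventually.of_forall fun y => ENNReal.ofReal_lt_top)]
    rfl
  have haeIoi : ∀ᵐ y ∂(mu15 m), y ∈ Ioi (0:ℝ) := ae_restrict_mem measurableSet_Ioi
  have hst : (0:ℝ) < Real.sqrt t := Real.sqrt_pos.2 ht
  -- the majorizing kernel with respect to mu15
  set K : ℝ → ℝ → ℝ≥0∞ := fun y ρ => ENNReal.ofReal (C * t ^ (-(1:ℝ)/2) *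
    min (ρ / Real.sqrt t) 1 ^ c * Real.exp (-(y - ρ) ^ 2 / (κ * t)) * ρ ^ (-m)) with hKdef
  have hKmeas : Measurable (Function.uncurry K) := by
    apply ENNReal.measurable_ofReal.comp
    fun_prop
  -- the gauge
  set h : ℝ → ℝ≥0∞ := fun y => ENNReal.ofReal (y ^ (-σ)) with hhdef
  have hhmeas : Measurable h := by fun_prop
  have hh0 : ∀ᵐ y ∂(mu15 m), h y ≠ 0 ∧ h y ≠ ⊤ := by
    filter_upwards [haeIoi] with y hy
    rw [mem_Ioi] at hy
    exact ⟨(ENNReal.ofReal_pos.2 (Real.rpow_pos_of_pos hy _)).ne', ENNReal.ofReal_ne_top⟩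
  have hF : AEMeasurable (fun ρ => (‖f ρ‖₊ : ℝ≥0∞)) (mu15 m) := hf.1.enorm
  -- powers of the gauge
  have hgauge : ∀ r : ℝ, 0 ≤ r → ∀ x : ℝ, 0 < x → h x ^ r = ENNReal.ofReal (x ^ (-(σ * r))) := by
    intro r hr x hx
    rw [hhdef, ENNReal.ofReal_rpow_of_nonneg (Real.rpow_nonneg hx.le _) hr]
    congr 1
    rw [← Real.rpow_mul hx.le]
    congr 1
    ring
  -- pointwise domination of the operator
  have hTle : ∀ y ∈ Ioi (0:ℝ),
      (‖∫ ρ in Ioi (0:ℝ), pB t y ρ * f ρ * ((ρ ^ c : ℝ) : ℂ)‖₊ : ℝ≥0∞)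
      ≤ ∫⁻ ρ, K y ρ * (‖f ρ‖₊ : ℝ≥0∞) ∂(mu15 m) := by
    intro y hy
    rw [mem_Ioi] at hy
    calc (‖∫ ρ in Ioi (0:ℝ), pB t y ρ * f ρ * ((ρ ^ c : ℝ) : ℂ)‖₊ : ℝ≥0∞)
        ≤ ∫⁻ ρ in Ioi (0:ℝ), (‖pB t y ρ * f ρ * ((ρ ^ c : ℝ) : ℂ)‖₊ : ℝ≥0∞) ∂volume :=
          enorm_integral_le_lintegral_enorm _
    _ ≤ ∫⁻ ρ in Ioi (0:ℝ), ENNReal.ofReal (ρ ^ m) * (K y ρ * (‖f ρ‖₊ : ℝ≥0∞)) ∂volume := by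
        apply lintegral_mono_ae
        filter_upwards [ae_restrict_mem measurableSet_Ioi] with ρ hρ
        rw [mem_Ioi] at hρ
        have hbnd := hker t ht y hy ρ hρ
        have e1 : (‖pB t y ρ * f ρ * ((ρ ^ c : ℝ) : ℂ)‖₊ : ℝ≥0∞)
            = (‖pB t y ρ‖₊ : ℝ≥0∞) * (‖f ρ‖₊ : ℝ≥0∞) * ENNReal.ofReal (ρ ^ c) := by
          rw [nnnorm_mul, nnnorm_mul, ENNReal.coe_mul, ENNReal.coe_mul]
          congr 1
          rw [← enorm_eq_nnnorm, ← ofReal_norm, Complex.norm_real, Real.norm_eq_abs,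
            abs_of_nonneg (Real.rpow_nonneg hρ.le _)]
        have e2 : (‖pB t y ρ‖₊ : ℝ≥0∞) ≤ ENNReal.ofReal (C * t ^ (-(1:ℝ)/2) * ρ ^ (-c) *
            min (ρ / Real.sqrt t) 1 ^ c * Real.exp (-(y - ρ) ^ 2 / (κ * t))) := by
          rw [← enorm_eq_nnnorm, ← ofReal_norm]
          exact ENNReal.ofReal_le_ofReal hbnd
        have e3 : ENNReal.ofReal (ρ ^ m) * (K y ρ * (‖f ρ‖₊ : ℝ≥0∞))
            = ENNReal.ofReal (C * t ^ (-(1:ℝ)/2) * ρ ^ (-c) *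
                min (ρ / Real.sqrt t) 1 ^ c * Real.exp (-(y - ρ) ^ 2 / (κ * t)))
              * (‖f ρ‖₊ : ℝ≥0∞) * ENNReal.ofReal (ρ ^ c) := by
          rw [hKdef]
          have hrm : ρ ^ m * ρ ^ (-m) = 1 := by
            rw [← Real.rpow_add hρ]; simp
          have hrc : ρ ^ (-c) * ρ ^ c = 1 := by
            rw [← Real.rpow_add hρ]; simp
          rw [← mul_assoc, ← ENNReal.ofReal_mul (Real.rpow_nonneg hρ.le _)]
          calc ENNReal.ofReal (ρ ^ m * (C * t ^ (-(1:ℝ)/2) *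
                min (ρ / Real.sqrt t) 1 ^ c * Real.exp (-(y - ρ) ^ 2 / (κ * t)) * ρ ^ (-m)))
                * (‖f ρ‖₊ : ℝ≥0∞)
              = ENNReal.ofReal ((C * t ^ (-(1:ℝ)/2) *
                min (ρ / Real.sqrt t) 1 ^ c * Real.exp (-(y - ρ) ^ 2 / (κ * t)))
                * (ρ ^ m * ρ ^ (-m))) * (‖f ρ‖₊ : ℝ≥0∞) := by ring_nf
          _ = ENNReal.ofReal (C * t ^ (-(1:ℝ)/2) *
                min (ρ / Real.sqrt t) 1 ^ c * Real.exp (-(y - ρ) ^ 2 / (κ * t)))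
                * (‖f ρ‖₊ : ℝ≥0∞) := by rw [hrm, mul_one]
          _ = ENNReal.ofReal ((C * t ^ (-(1:ℝ)/2) *
                min (ρ / Real.sqrt t) 1 ^ c * Real.exp (-(y - ρ) ^ 2 / (κ * t)))
                * (ρ ^ (-c) * ρ ^ c)) * (‖f ρ‖₊ : ℝ≥0∞) := by rw [hrc, mul_one]
          _ = ENNReal.ofReal (C * t ^ (-(1:ℝ)/2) * ρ ^ (-c) *
                min (ρ / Real.sqrt t) 1 ^ c * Real.exp (-(y - ρ) ^ 2 / (κ * t)))
                * ENNReal.ofReal (ρ ^ c) * (‖f ρ‖₊ : ℝ≥0∞) := by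
              rw [← ENNReal.ofReal_mul (by positivity)]
              congr 2
              ring
          _ = ENNReal.ofReal (C * t ^ (-(1:ℝ)/2) * ρ ^ (-c) *
                min (ρ / Real.sqrt t) 1 ^ c * Real.exp (-(y - ρ) ^ 2 / (κ * t)))
                * (‖f ρ‖₊ : ℝ≥0∞) * ENNReal.ofReal (ρ ^ c) := by ring
        rw [e1, e3]
        exact mul_le_mul_left (mul_le_mul_left e2 _) _
    _ = ∫⁻ ρ, K y ρ * (‖f ρ‖₊ : ℝ≥0∞) ∂(mu15 m) := (hmu _).symm
  -- Schur condition H1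
  have hH1 : ∀ᵐ y ∂(mu15 m), (∫⁻ ρ, K y ρ * h ρ ^ q ∂(mu15 m))
      ≤ ENNReal.ofReal B * h y ^ q := by
    filter_upwards [haeIoi] with y hy
    rw [mem_Ioi] at hy
    have step1 : ∫⁻ ρ, K y ρ * h ρ ^ q ∂(mu15 m)
        = ENNReal.ofReal C * ∫⁻ ρ in Ioi (0:ℝ), ENNReal.ofReal (t ^ (-(1:ℝ)/2) *
            min (ρ / Real.sqrt t) 1 ^ c * Real.exp (-(y - ρ) ^ 2 / (κ * t))
            * ρ ^ (-(σ * q))) := by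
      rw [hmu]
      rw [← lintegral_const_mul _ (by fun_prop)]
      apply setLIntegral_congr_fun measurableSet_Ioi
      intro ρ hρ
      rw [mem_Ioi] at hρ
      beta_reduce
      rw [hgauge q hq0.le ρ hρ, hKdef]
      have hrm : ρ ^ m * ρ ^ (-m) = 1 := by rw [← Real.rpow_add hρ]; simp
      rw [← ENNReal.ofReal_mul (by positivity), ← ENNReal.ofReal_mul (by positivity),
        ← ENNReal.ofReal_mul hC.le]
      congr 1
      calc ρ ^ m * (C * t ^ (-(1:ℝ)/2) * min (ρ / Real.sqrt t) 1 ^ c *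
            Real.exp (-(y - ρ) ^ 2 / (κ * t)) * ρ ^ (-m) * ρ ^ (-(σ * q)))
          = (ρ ^ m * ρ ^ (-m)) * (C * (t ^ (-(1:ℝ)/2) * min (ρ / Real.sqrt t) 1 ^ c *
            Real.exp (-(y - ρ) ^ 2 / (κ * t)) * ρ ^ (-(σ * q)))) := by ring
      _ = C * (t ^ (-(1:ℝ)/2) * min (ρ / Real.sqrt t) 1 ^ c *
            Real.exp (-(y - ρ) ^ 2 / (κ * t)) * ρ ^ (-(σ * q))) := by rw [hrm, one_mul]
    have step2 := hA₁ t ht y hy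
    rw [Real.rpow_zero, ENNReal.ofReal_one, one_mul] at step2
    calc ∫⁻ ρ, K y ρ * h ρ ^ q ∂(mu15 m)
        ≤ ENNReal.ofReal C * ENNReal.ofReal (A₁ * y ^ (-(σ * q))) := by
          rw [step1]
          exact mul_le_mul_right step2 _
    _ ≤ ENNReal.ofReal B * h y ^ q := by
        rw [hgauge q hq0.le y hy, ← ENNReal.ofReal_mul hC.le,
          ← ENNReal.ofReal_mul hBpos.le]
        apply ENNReal.ofReal_le_ofReal
        rw [hBdef]
        calc C * (A₁ * y ^ (-(σ * q))) = C * A₁ * y ^ (-(σ * q)) := by ring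
        _ ≤ C * max A₁ A₂ * y ^ (-(σ * q)) := by
            gcongr <;> first
              | exact le_max_left A₁ A₂
              | exact Real.rpow_nonneg hy.le _
              | linarith
  -- Schur condition H2
  have hH2 : ∀ᵐ ρ ∂(mu15 m), (∫⁻ y, K y ρ * h y ^ p ∂(mu15 m))
      ≤ ENNReal.ofReal B * h ρ ^ p := by
    filter_upwards [haeIoi] with ρ hρ
    rw [mem_Ioi] at hρ
    have step1 : ∫⁻ y, K y ρ * h y ^ p ∂(mu15 m)
        = ENNReal.ofReal (C * ρ ^ (-m)) * (ENNReal.ofReal (min (ρ / Real.sqrt t) 1 ^ c) *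
          ∫⁻ y in Ioi (0:ℝ), ENNReal.ofReal (t ^ (-(1:ℝ)/2) *
            min (y / Real.sqrt t) 1 ^ (0:ℝ) * Real.exp (-(ρ - y) ^ 2 / (κ * t))
            * y ^ (-(σ * p - m)))) := by
      rw [hmu, ← mul_assoc, ← lintegral_const_mul _ (by fun_prop)]
      apply setLIntegral_congr_fun measurableSet_Ioi
      intro y hy
      rw [mem_Ioi] at hy
      beta_reduce
      rw [hgauge p hp0.le y hy, hKdef]
      have hym : y ^ m * y ^ (-(σ * p)) = y ^ (-(σ * p - m)) := by
        rw [← Real.rpow_add hy]; congr 1; ring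
      rw [← mul_assoc, ← ENNReal.ofReal_mul (by positivity), ← ENNReal.ofReal_mul (by positivity),
        ← ENNReal.ofReal_mul (by positivity), ← ENNReal.ofReal_mul (by positivity)]
      congr 1
      rw [Real.rpow_zero, show (ρ - y) ^ 2 = (y - ρ) ^ 2 by ring, ← hym]
      ring
    have step2 := hA₂ t ht ρ hρ
    calc ∫⁻ y, K y ρ * h y ^ p ∂(mu15 m)
        ≤ ENNReal.ofReal (C * ρ ^ (-m)) * ENNReal.ofReal (A₂ * ρ ^ (-(σ * p - m))) := by
          rw [step1]
          exact mul_le_mul_right step2 _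
    _ ≤ ENNReal.ofReal B * h ρ ^ p := by
        rw [hgauge p hp0.le ρ hρ, ← ENNReal.ofReal_mul (by positivity),
          ← ENNReal.ofReal_mul hBpos.le]
        apply ENNReal.ofReal_le_ofReal
        have hcomb : ρ ^ (-m) * ρ ^ (-(σ * p - m)) = ρ ^ (-(σ * p)) := by
          rw [← Real.rpow_add hρ]; congr 1; ring
        calc C * ρ ^ (-m) * (A₂ * ρ ^ (-(σ * p - m)))
            = C * A₂ * (ρ ^ (-m) * ρ ^ (-(σ * p - m))) := by ring
        _ = C * A₂ * ρ ^ (-(σ * p)) := by rw [hcomb]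
        _ ≤ B * ρ ^ (-(σ * p)) := by
            rw [hBdef]
            gcongr <;> first
              | exact le_max_right A₁ A₂
              | exact Real.rpow_nonneg hρ.le _
              | linarith
  -- apply the Schur test
  have hschur := schur (mu15 m) hpq K hKmeas h hhmeas hh0
    (A := ENNReal.ofReal B) (ENNReal.ofReal_pos.2 hBpos).ne' ENNReal.ofReal_ne_top
    hH1 hH2 (fun ρ => (‖f ρ‖₊ : ℝ≥0∞)) hF
  -- conclude
  have hpe0 : (ENNReal.ofReal p) ≠ 0 := by
    simp only [ne_eq, ENNReal.ofReal_eq_zero, not_le]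
    linarith
  have hpetop : (ENNReal.ofReal p) ≠ ⊤ := ENNReal.ofReal_ne_top
  have htoReal : (ENNReal.ofReal p).toReal = p := ENNReal.toReal_ofReal hp0.le
  rw [eLpNorm_eq_lintegral_rpow_enorm_toReal hpe0 hpetop, eLpNorm_eq_lintegral_rpow_enorm_toReal hpe0 hpetop,
    htoReal]
  have hmain : ∫⁻ y, (‖∫ ρ in Ioi (0:ℝ), pB t y ρ * f ρ * ((ρ ^ c : ℝ) : ℂ)‖₊ : ℝ≥0∞) ^ p
      ∂(mu15 m) ≤ (ENNReal.ofReal B) ^ p * ∫⁻ ρ, (‖f ρ‖₊ : ℝ≥0∞) ^ p ∂(mu15 m) := by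
    refine le_trans ?_ hschur
    apply lintegral_mono_ae
    filter_upwards [haeIoi] with y hy
    exact ENNReal.rpow_le_rpow (hTle y hy) hp0.le
  calc (∫⁻ y, (‖∫ ρ in Ioi (0:ℝ), pB t y ρ * f ρ * ((ρ ^ c : ℝ) : ℂ)‖₊ : ℝ≥0∞) ^ p
        ∂(mu15 m)) ^ (1/p)
      ≤ ((ENNReal.ofReal B) ^ p * ∫⁻ ρ, (‖f ρ‖₊ : ℝ≥0∞) ^ p ∂(mu15 m)) ^ (1/p) :=
        ENNReal.rpow_le_rpow hmain (by positivity)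
  _ = ENNReal.ofReal B * (∫⁻ ρ, (‖f ρ‖₊ : ℝ≥0∞) ^ p ∂(mu15 m)) ^ (1/p) := by
      rw [ENNReal.mul_rpow_of_nonneg _ _ (by positivity), ← ENNReal.rpow_mul,
        show p * (1/p) = 1 by field_simp, ENNReal.rpow_one]
  _ = (B.toNNReal : ℝ≥0∞) * (∫⁻ ρ, (‖f ρ‖₊ : ℝ≥0∞) ^ p ∂(mu15 m)) ^ (1/p) := by
      rw [ENNReal.ofReal]
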